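/- Let m, n ≥ 0 with m ≤ n, and let Z = {P_0, ..., P_m, P} ⊆ ℙ^n where P_i = [0:...:0:1:0:...:0] (1 in position i+1) and P = [1:x:0:...:0] lies in the linear span of P_0,...,P_m. Let d ≥ 3. Then the conditions that a degree-d form f vanish to second order at each P_i and have all first partial derivatives vanish at P impose (m+1)(n+1) + n − 1 linearly independent linear conditions on H^0(ℙ^n, O(d)). -/

import Mathlib

open MvPolynomial in
lemma aux_L1 {F : Type*} [CommRing F] {σ : Type*} (w : σ → F) (k i : σ) (e : ℕ) :
    MvPolynomial.aeval w (X k * X i ^ e : MvPolynomial σ F) = w k * w i ^ e := by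
  simp

open MvPolynomial in
lemma aux_L2 {F : Type*} [CommRing F] {σ : Type*} [DecidableEq σ] (w : σ → F) (j k i : σ) (e : ℕ) :
    MvPolynomial.aeval w (MvPolynomial.pderiv j (X k * X i ^ e : MvPolynomial σ F)) =
      (if k = j then 1 else 0) * w i ^ e
        + (e : F) * w k * w i ^ (e - 1) * (if i = j then 1 else 0) := by
  simp [pderiv_mul, pderiv_pow, pderiv_X, Pi.single_apply, apply_ite (aeval w)]
  split_ifs <;> simp <;> ring

open MvPolynomial in
lemma aux_L3 {F : Type*} [CommRing F] {σ : Type*} [DecidableEq σ] (w : σ → F) (j c a b : σ) (e : ℕ) :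
    MvPolynomial.aeval w (MvPolynomial.pderiv j (X c * X a ^ e * X b : MvPolynomial σ F)) =
      (if c = j then 1 else 0) * w a ^ e * w b
        + (e : F) * w c * w a ^ (e - 1) * (if a = j then 1 else 0) * w b
        + w c * w a ^ e * (if b = j then 1 else 0) := by
  simp [pderiv_mul, pderiv_pow, pderiv_X, Pi.single_apply, apply_ite (aeval w)]
  split_ifs <;> simp <;> ring

open MvPolynomial in
lemma aux_L4 {F : Type*} [CommRing F] {σ : Type*} (w : σ → F) (c a b : σ) (e : ℕ) :
    MvPolynomial.aeval w (X c * X a ^ e * X b : MvPolynomial σ F) = w c * w a ^ e * w b := by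
  simp

theorem stmt_11 {F : Type*} [Field F] (m n d : ℕ) (hmn : m ≤ n) (hd : 3 ≤ d)
    (x : F) (hx : x ≠ 0)
    (E : Fin (m + 1) → (Fin (n + 1) → F))
    (hE : ∀ i, E i = fun j : Fin (n + 1) => if (j : ℕ) = (i : ℕ) then (1 : F) else 0)
    (P : Fin (n + 1) → F)
    (hP : P = fun j : Fin (n + 1) => if (j : ℕ) = 0 then (1 : F) else if (j : ℕ) = 1 then x else 0)
    (hspan : P ∈ Submodule.span F (Set.range E)) :
    (m + 1) * (n + 1) + n - 1 ≤
      Module.finrank F (Submodule.span F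
        ((Set.range fun i : Fin (m + 1) =>
            (MvPolynomial.aeval (E i)).toLinearMap.comp
              (Submodule.subtype (MvPolynomial.homogeneousSubmodule (Fin (n + 1)) F d))) ∪
         (Set.range fun ik : Fin (m + 1) × Fin (n + 1) =>
            ((MvPolynomial.aeval (E ik.1)).toLinearMap.comp
                (MvPolynomial.pderiv ik.2).toLinearMap).comp
              (Submodule.subtype (MvPolynomial.homogeneousSubmodule (Fin (n + 1)) F d))) ∪
         (Set.range fun k : Fin (n + 1) =>
            ((MvPolynomial.aeval P).toLinearMap.comp
                (MvPolynomial.pderiv k).toLinearMap).comp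
              (Submodule.subtype (MvPolynomial.homogeneousSubmodule (Fin (n + 1)) F d))))) := by
  classical
  set V := MvPolynomial.homogeneousSubmodule (Fin (n + 1)) F d with hVdef
  set A : Fin (m + 1) → (V →ₗ[F] F) := fun i =>
    (MvPolynomial.aeval (E i)).toLinearMap.comp (Submodule.subtype V) with hAdef
  set B : Fin (m + 1) × Fin (n + 1) → (V →ₗ[F] F) := fun ik =>
    ((MvPolynomial.aeval (E ik.1)).toLinearMap.comp
      (MvPolynomial.pderiv ik.2).toLinearMap).comp (Submodule.subtype V) with hBdef
  set C : Fin (n + 1) → (V →ₗ[F] F) := fun k =>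
    ((MvPolynomial.aeval P).toLinearMap.comp
      (MvPolynomial.pderiv k).toLinearMap).comp (Submodule.subtype V) with hCdef
  set S : Set (V →ₗ[F] F) := (Set.range A ∪ Set.range B) ∪ Set.range C with hSdef
  show (m + 1) * (n + 1) + n - 1 ≤ Module.finrank F (Submodule.span F S)
  have hSfin : S.Finite :=
    ((Set.finite_range A).union (Set.finite_range B)).union (Set.finite_range C)
  haveI : FiniteDimensional F (Submodule.span F S) :=
    FiniteDimensional.span_of_finite F hSfin
  -- notation
  set W := Submodule.span F S with hWdef
  have hEv : ∀ (i : Fin (m + 1)) (j : Fin (n + 1)),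
      E i j = if (j : ℕ) = (i : ℕ) then (1 : F) else 0 := by
    intro i j; rw [hE i]
  have hPv : ∀ j : Fin (n + 1),
      P j = if (j : ℕ) = 0 then (1 : F) else if (j : ℕ) = 1 then x else 0 := by
    intro j; rw [hP]
  set emb : Fin (m + 1) → Fin (n + 1) := fun i => ⟨(i : ℕ), by omega⟩ with hembdef
  set z : Fin (n + 1) := ⟨0, by omega⟩ with hzdef
  set o : Fin (n + 1) := ⟨min 1 n, by omega⟩ with hodef
  -- index type
  -- dual vectors
  let vp : ((Fin (m + 1) × Fin (n + 1)) ⊕ {c : Fin (n + 1) // 2 ≤ (c : ℕ)}) → MvPolynomial (Fin (n + 1)) F := fun t =>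
    match t with
    | Sum.inl (i, k) => MvPolynomial.X k * MvPolynomial.X (emb i) ^ (d - 1)
    | Sum.inr c => MvPolynomial.X c.1 * MvPolynomial.X z ^ (d - 2) * MvPolynomial.X o
  have hvp : ∀ t, vp t ∈ V := by
    intro t
    rw [hVdef, MvPolynomial.mem_homogeneousSubmodule]
    match t with
    | Sum.inl (i, k) =>
        have h := (MvPolynomial.isHomogeneous_X F k).mul
          ((MvPolynomial.isHomogeneous_X F (emb i)).pow (d - 1))
        have he : 1 + 1 * (d - 1) = d := by omega
        exact he ▸ h
    | Sum.inr c =>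
        have h := ((MvPolynomial.isHomogeneous_X F c.1).mul
          ((MvPolynomial.isHomogeneous_X F z).pow (d - 2))).mul
          (MvPolynomial.isHomogeneous_X F o)
        have he : 1 + 1 * (d - 2) + 1 = d := by omega
        exact he ▸ h
  let vv : ((Fin (m + 1) × Fin (n + 1)) ⊕ {c : Fin (n + 1) // 2 ≤ (c : ℕ)}) → V := fun t => ⟨vp t, hvp t⟩
  -- functionals
  let φ : ((Fin (m + 1) × Fin (n + 1)) ⊕ {c : Fin (n + 1) // 2 ≤ (c : ℕ)}) → (V →ₗ[F] F) := fun s =>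
    match s with
    | Sum.inl (i, k) => if (k : ℕ) = (i : ℕ) then A i else B (i, k)
    | Sum.inr c => C c.1 - ∑ i : Fin (m + 1), (P (emb i)) ^ (d - 1) • B (i, c.1)
  have hφW : ∀ s, φ s ∈ W := by
    intro s
    match s with
    | Sum.inl (i, k) =>
        by_cases h : (k : ℕ) = (i : ℕ)
        · simp only [φ, h, if_pos]
          exact Submodule.subset_span (Or.inl (Or.inl ⟨i, rfl⟩))
        · simp only [φ, h, if_neg, if_false]
          exact Submodule.subset_span (Or.inl (Or.inr ⟨(i, k), rfl⟩))
    | Sum.inr c =>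
        refine sub_mem (Submodule.subset_span (Or.inr ⟨c.1, rfl⟩)) ?_
        exact Submodule.sum_mem _ fun i _ => Submodule.smul_mem _ _
          (Submodule.subset_span (Or.inl (Or.inr ⟨(i, c.1), rfl⟩)))
  -- applications
  have hAapp : ∀ (i : Fin (m + 1)) (t : ((Fin (m + 1) × Fin (n + 1)) ⊕ {c : Fin (n + 1) // 2 ≤ (c : ℕ)})), A i (vv t) = MvPolynomial.aeval (E i) (vp t) := by
    intro i t; rfl
  have hBapp : ∀ (i : Fin (m + 1)) (k : Fin (n + 1)) (t : ((Fin (m + 1) × Fin (n + 1)) ⊕ {c : Fin (n + 1) // 2 ≤ (c : ℕ)})),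
      B (i, k) (vv t) = MvPolynomial.aeval (E i) (MvPolynomial.pderiv k (vp t)) := by
    intro i k t; rfl
  have hCapp : ∀ (k : Fin (n + 1)) (t : ((Fin (m + 1) × Fin (n + 1)) ⊕ {c : Fin (n + 1) // 2 ≤ (c : ℕ)})),
      C k (vv t) = MvPolynomial.aeval P (MvPolynomial.pderiv k (vp t)) := by
    intro k t; rfl
  -- the key evaluation
  have hd1 : d - 1 ≠ 0 := by omega
  have hd2 : d - 2 ≠ 0 := by omega
  have hembv : ∀ i : Fin (m + 1), ((emb i : Fin (n + 1)) : ℕ) = (i : ℕ) := fun i => rfl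
  have hzv : ((z : Fin (n + 1)) : ℕ) = 0 := rfl
  have hov : ((o : Fin (n + 1)) : ℕ) = min 1 n := rfl
  have hval : ∀ s t : ((Fin (m + 1) × Fin (n + 1)) ⊕ {c : Fin (n + 1) // 2 ≤ (c : ℕ)}), φ s (vv t) =
      if s = t then (Sum.elim (fun _ => (1 : F)) (fun _ => x) t) else 0 := by
    have hφ1 : ∀ (i : Fin (m + 1)) (k : Fin (n + 1)),
        φ (Sum.inl (i, k)) = if (k : ℕ) = (i : ℕ) then A i else B (i, k) := fun _ _ => rfl
    have hφ2 : ∀ c : {c : Fin (n + 1) // 2 ≤ (c : ℕ)},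
        φ (Sum.inr c) = C c.1 - ∑ i : Fin (m + 1), (P (emb i)) ^ (d - 1) • B (i, c.1) :=
      fun _ => rfl
    have hvp1 : ∀ (i : Fin (m + 1)) (k : Fin (n + 1)),
        vp (Sum.inl (i, k)) = MvPolynomial.X k * MvPolynomial.X (emb i) ^ (d - 1) :=
      fun _ _ => rfl
    have hvp2 : ∀ c : {c : Fin (n + 1) // 2 ≤ (c : ℕ)},
        vp (Sum.inr c) = MvPolynomial.X c.1 * MvPolynomial.X z ^ (d - 2) * MvPolynomial.X o :=
      fun _ => rfl
    -- the third-family dual vectors are killed by all B functionals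
    have hB30 : ∀ (i : Fin (m + 1)) (j : Fin (n + 1)) (c' : {c : Fin (n + 1) // 2 ≤ (c : ℕ)}),
        MvPolynomial.aeval (E i) (MvPolynomial.pderiv j
          (MvPolynomial.X c'.1 * MvPolynomial.X z ^ (d - 2) * MvPolynomial.X o :
            MvPolynomial (Fin (n + 1)) F)) = 0 := by
      intro i j c'
      have hn2 : 2 ≤ n := by have h1 := c'.2; have h2 := c'.1.2; omega
      have hov1 : ((o : Fin (n + 1)) : ℕ) = 1 := by rw [hov]; omega
      rw [aux_L3]
      by_cases hi0 : (i : ℕ) = 0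
      · have hEo : E i o = 0 := by rw [hEv, hov1, if_neg (by omega)]
        have hEc' : E i c'.1 = 0 := by rw [hEv, if_neg (by have := c'.2; omega)]
        rw [hEo, hEc']; ring
      · have hEz : E i z = 0 := by rw [hEv, hzv, if_neg (by omega)]
        rw [hEz, zero_pow hd2]
        by_cases hi1 : (i : ℕ) = 1
        · have hEc' : E i c'.1 = 0 := by rw [hEv, if_neg (by have := c'.2; omega)]
          rw [hEc']; ring
        · have hEo : E i o = 0 := by rw [hEv, hov1, if_neg (by omega)]
          rw [hEo]; ring
    rintro (⟨i, k⟩ | ⟨c, hc⟩) (⟨i', k'⟩ | ⟨c', hc'⟩)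
    · -- inl, inl
      rw [hφ1]
      rcases eq_or_ne i i' with rfl | hii
      · rcases eq_or_ne k k' with rfl | hkk
        · rw [if_pos rfl, Sum.elim_inl]
          by_cases hki : (k : ℕ) = (i : ℕ)
          · rw [if_pos hki, hAapp i (Sum.inl (i, k)), hvp1, aux_L1,
              hEv i k, if_pos hki, hEv i (emb i), hembv i, if_pos rfl]
            simp
          · rw [if_neg hki, hBapp i k (Sum.inl (i, k)), hvp1, aux_L2,
              if_pos rfl, hEv i (emb i), hembv i, if_pos rfl, hEv i k, if_neg hki]
            simp
        · rw [if_neg (show ¬(Sum.inl (i, k) : (Fin (m + 1) × Fin (n + 1)) ⊕ {c : Fin (n + 1) // 2 ≤ (c : ℕ)}) = Sum.inl (i, k') by simp [hkk])]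
          by_cases hki : (k : ℕ) = (i : ℕ)
          · rw [if_pos hki, hAapp i (Sum.inl (i, k')), hvp1, aux_L1,
              hEv i k', if_neg (fun h => hkk (Fin.ext (by omega)))]
            simp
          · rw [if_neg hki, hBapp i k (Sum.inl (i, k')), hvp1, aux_L2,
              if_neg (fun h => hkk (Fin.ext (by rw [h]))),
              if_neg (fun h : emb i = k => hki (by rw [← h, hembv]))]
            ring
      · rw [if_neg (show ¬(Sum.inl (i, k) : (Fin (m + 1) × Fin (n + 1)) ⊕ {c : Fin (n + 1) // 2 ≤ (c : ℕ)}) = Sum.inl (i', k') by simp [hii])]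
        have hEe : E i (emb i') = 0 := by
          rw [hEv, hembv, if_neg (fun h => hii (Fin.ext (by omega)))]
        by_cases hki : (k : ℕ) = (i : ℕ)
        · rw [if_pos hki, hAapp i (Sum.inl (i', k')), hvp1, aux_L1, hEe,
            zero_pow hd1, mul_zero]
        · rw [if_neg hki, hBapp i k (Sum.inl (i', k')), hvp1, aux_L2, hEe,
            zero_pow hd1, zero_pow (by omega : d - 1 - 1 ≠ 0)]
          ring
    · -- inl, inr
      have hn2 : 2 ≤ n := by have h1 := hc'; have h2 := c'.2; omega
      have hov1 : ((o : Fin (n + 1)) : ℕ) = 1 := by rw [hov]; omega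
      rw [hφ1, if_neg (show ¬(Sum.inl (i, k) : (Fin (m + 1) × Fin (n + 1)) ⊕ {c : Fin (n + 1) // 2 ≤ (c : ℕ)}) = Sum.inr ⟨c', hc'⟩ by simp)]
      by_cases hki : (k : ℕ) = (i : ℕ)
      · rw [if_pos hki, hAapp i (Sum.inr ⟨c', hc'⟩), hvp2, aux_L4]
        by_cases hi0 : (i : ℕ) = 0
        · rw [hEv i o, hov1, if_neg (by omega), mul_zero]
        · rw [hEv i z, hzv, if_neg (by omega), zero_pow hd2, mul_zero, zero_mul]
      · rw [if_neg hki, hBapp i k (Sum.inr ⟨c', hc'⟩), hvp2]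
        exact hB30 i k ⟨c', hc'⟩
    · -- inr, inl
      have hPc : P c = 0 := by rw [hPv]; rw [if_neg (by omega), if_neg (by omega)]
      rw [hφ2, if_neg (show ¬(Sum.inr (⟨c, hc⟩ : {c : Fin (n + 1) // 2 ≤ (c : ℕ)}) : (Fin (m + 1) × Fin (n + 1)) ⊕ {c : Fin (n + 1) // 2 ≤ (c : ℕ)}) = Sum.inl (i', k') by simp)]
      simp only [LinearMap.sub_apply, LinearMap.coe_sum, Finset.sum_apply,
        LinearMap.smul_apply, smul_eq_mul]
      rw [hCapp c (Sum.inl (i', k')), hvp1, aux_L2]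
      have hBval : ∀ i : Fin (m + 1), (B (i, c)) (vv (Sum.inl (i', k'))) =
          (if k' = c then (1:F) else 0) * (E i (emb i')) ^ (d - 1)
            + ((d - 1 : ℕ) : F) * E i k' * (E i (emb i')) ^ (d - 1 - 1)
              * (if emb i' = c then 1 else 0) := by
        intro i; rw [hBapp i c (Sum.inl (i', k')), hvp1, aux_L2]
      rw [Finset.sum_congr rfl fun i _ => by rw [hBval i]]
      by_cases hc4 : emb i' = c
      · have hPe : P (emb i') = 0 := by rw [hc4, hPc]
        rw [hPe, zero_pow hd1, zero_pow (by omega : d - 1 - 1 ≠ 0)]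
        have hz : ∀ i : Fin (m + 1), i ∈ Finset.univ → P (emb i) ^ (d - 1) *
            ((if k' = c then (1:F) else 0) * (E i (emb i')) ^ (d - 1)
              + ((d - 1 : ℕ) : F) * E i k' * (E i (emb i')) ^ (d - 1 - 1)
                * (if emb i' = c then 1 else 0)) = 0 := by
          intro i _
          by_cases hii : (i : ℕ) = (i' : ℕ)
          · have : P (emb i) = 0 := by
              have he : emb i = emb i' := Fin.ext (by rw [hembv, hembv, hii])
              rw [he, hPe]
            rw [this, zero_pow hd1, zero_mul]
          · have hE0 : E i (emb i') = 0 := by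
              rw [hEv, hembv, if_neg (by omega)]
            rw [hE0, zero_pow hd1, zero_pow (by omega : d - 1 - 1 ≠ 0)]
            ring
        rw [Finset.sum_eq_zero hz]
        ring
      · have hz : ∀ i : Fin (m + 1), i ∈ Finset.univ → P (emb i) ^ (d - 1) *
            ((if k' = c then (1:F) else 0) * (E i (emb i')) ^ (d - 1)
              + ((d - 1 : ℕ) : F) * E i k' * (E i (emb i')) ^ (d - 1 - 1)
                * (if emb i' = c then 1 else 0)) =
            if i = i' then P (emb i') ^ (d - 1) * (if k' = c then (1:F) else 0) else 0 := by
          intro i _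
          rw [if_neg hc4]
          rcases eq_or_ne i i' with rfl | hii
          · rw [hEv i (emb i), hembv i, if_pos rfl, if_pos rfl]
            ring
          · have hE0 : E i (emb i') = 0 := by
              rw [hEv, hembv, if_neg (fun h => hii (Fin.ext (by omega)))]
            rw [hE0, zero_pow hd1, zero_pow (by omega : d - 1 - 1 ≠ 0), if_neg hii]
            ring
        rw [Finset.sum_congr rfl hz,
          Finset.sum_ite_eq' Finset.univ i'
            (fun _ => P (emb i') ^ (d - 1) * (if k' = c then (1:F) else 0)),
          if_pos (Finset.mem_univ i'), if_neg hc4]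
        ring
    · -- inr, inr
      have hn2 : 2 ≤ n := by have h1 := hc'; have h2 := c'.2; omega
      have hov1 : ((o : Fin (n + 1)) : ℕ) = 1 := by rw [hov]; omega
      have hPz : P z = 1 := by rw [hPv, hzv]; simp
      have hPo : P o = x := by rw [hPv, hov1]; norm_num
      have hPc' : P c' = 0 := by rw [hPv]; rw [if_neg (by omega), if_neg (by omega)]
      have hzc : ¬ (z = c) := fun h => by have := congrArg Fin.val h; rw [hzv] at this; omega
      have hoc : ¬ (o = c) := fun h => by have := congrArg Fin.val h; rw [hov1] at this; omega
      rw [hφ2]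
      simp only [LinearMap.sub_apply, LinearMap.coe_sum, Finset.sum_apply,
        LinearMap.smul_apply, smul_eq_mul]
      rw [hCapp c (Sum.inr ⟨c', hc'⟩), hvp2, aux_L3, if_neg hzc, if_neg hoc,
        hPz, hPo, hPc']
      have hz : ∀ i : Fin (m + 1), i ∈ Finset.univ →
          P (emb i) ^ (d - 1) * (B (i, c)) (vv (Sum.inr ⟨c', hc'⟩)) = 0 := by
        intro i _
        rw [hBapp i c (Sum.inr ⟨c', hc'⟩), hvp2, hB30 i c ⟨c', hc'⟩, mul_zero]
      rw [Finset.sum_eq_zero hz, sub_zero]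
      rcases eq_or_ne c' c with rfl | hcc
      · rw [if_pos rfl,
          if_pos (show (Sum.inr ⟨c', hc⟩ : (Fin (m + 1) × Fin (n + 1)) ⊕ {c : Fin (n + 1) // 2 ≤ (c : ℕ)}) = Sum.inr ⟨c', hc'⟩ from rfl),
          Sum.elim_inr]
        simp
      · rw [if_neg hcc, if_neg (by simp [Subtype.ext_iff]; exact fun h => hcc h.symm)]
        ring
  -- linear independence
  have liφ : LinearIndependent F φ := by
    rw [Fintype.linearIndependent_iff]
    intro g hg s0
    have h0 := congrArg (fun (L : V →ₗ[F] F) => L (vv s0)) hg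
    simp only [LinearMap.coe_sum, Finset.sum_apply, LinearMap.smul_apply, smul_eq_mul,
      LinearMap.zero_apply, hval] at h0
    rw [Finset.sum_congr rfl (fun s _ => by rw [mul_ite, mul_zero]),
      Finset.sum_ite_eq' Finset.univ s0
        (fun s => g s * Sum.elim (fun _ => (1 : F)) (fun _ => x) s0)] at h0
    simp only [Finset.mem_univ, if_pos] at h0
    rcases s0 with s0 | s0
    · simpa using h0
    · simp only [Sum.elim_inr] at h0
      exact (mul_eq_zero.mp h0).resolve_right hx
  have liΦ : LinearIndependent F (fun s : ((Fin (m + 1) × Fin (n + 1)) ⊕ {c : Fin (n + 1) // 2 ≤ (c : ℕ)}) => (⟨φ s, hφW s⟩ : W)) :=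
    LinearIndependent.of_comp W.subtype liφ
  have hcard : Fintype.card ((Fin (m + 1) × Fin (n + 1)) ⊕ {c : Fin (n + 1) // 2 ≤ (c : ℕ)}) ≤ Module.finrank F W := liΦ.fintype_card_le_finrank
  have hcardι : Fintype.card ((Fin (m + 1) × Fin (n + 1)) ⊕ {c : Fin (n + 1) // 2 ≤ (c : ℕ)})
      = (m + 1) * (n + 1) + Fintype.card {c : Fin (n + 1) // 2 ≤ (c : ℕ)} := by
    simp [Fintype.card_sum, Fintype.card_prod]
  have hsub : 1 ≤ n → n - 1 ≤ Fintype.card {c : Fin (n + 1) // 2 ≤ (c : ℕ)} := by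
    intro hn
    have : Fintype.card (Fin (n - 1)) ≤ Fintype.card {c : Fin (n + 1) // 2 ≤ (c : ℕ)} := by
      apply Fintype.card_le_of_injective
        (fun i => ⟨⟨(i : ℕ) + 2, by omega⟩, by simp⟩)
      intro a b hab
      have : (a : ℕ) + 2 = (b : ℕ) + 2 := congrArg (fun c => ((c : {c : Fin (n+1) // 2 ≤ (c : ℕ)}) : Fin (n+1)).val) hab
      exact Fin.ext (by omega)
    simpa using this
  rcases Nat.eq_zero_or_pos n with hn | hn
  · have hm : m = 0 := by omega
    have h0 : (m + 1) * (n + 1) + n - 1 = 0 := by rw [hm, hn]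
    exact h0 ▸ Nat.zero_le _
  · have := hsub hn
    omega
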